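/- arXiv:2111.02824 — 2 statements merged into one kernel-verified Lean document; each statement's English description precedes it below -/
import Mathlib

section
/- An LFSA S is not E_f-predictable if and only if in the self-composition CC(S_n, S_n) of the normal subautomaton there exists a run q0' →s1' q1' from an initial state q0' such that (a) in S there is a transition (q1'(L), e_f, q) for some faulty event e_f ∈ E_f and some state q, and (b) in S_n there is a transition cycle reachable from q1'(R). -/
/-- A labeled finite-state automaton (LFSA): transition relation `δ`,
initial states `Q0`, labeling `lab` (where `none` stands for ε, i.e. unobservable). -/
structure LFSA (Q : Type*) (E : Type*) (A : Type*) where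
  δ : Q → E → Q → Prop
  Q0 : Set Q
  lab : E → Option A

namespace LFSA

variable {Q Q1 Q2 E A : Type*}

/-- A run `q →s q'` over a finite event sequence. -/
inductive Run (S : LFSA Q E A) : Q → List E → Q → Prop
  | nil (q : Q) : Run S q [] q
  | cons {q q' q'' : Q} {e : E} {s : List E} :
      S.δ q e q' → Run S q' s q'' → Run S q (e :: s) q''

/-- Output (label sequence) of an event sequence. -/
def out (S : LFSA Q E A) (s : List E) : List A := s.filterMap S.lab

/-- Generated finite language. -/
def L (S : LFSA Q E A) : Set (List E) := {s | ∃ q0 ∈ S.Q0, ∃ q, S.Run q0 s q}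

/-- Current-state estimate after observing `σ`. -/
def M (S : LFSA Q E A) (σ : List A) : Set Q :=
  {q | ∃ q0 ∈ S.Q0, ∃ s : List E, S.out s = σ ∧ S.Run q0 s q}

/-- Reachability via a nonempty event sequence. -/
def ReachPlus (S : LFSA Q E A) (q q' : Q) : Prop := ∃ s : List E, s ≠ [] ∧ S.Run q s q'

/-- There is a transition cycle reachable from `q` (a cycle at `q` itself counts). -/
def CycleReachableFrom (S : LFSA Q E A) (q : Q) : Prop :=
  ∃ p : Q, (p = q ∨ S.ReachPlus q p) ∧ ∃ s : List E, s ≠ [] ∧ S.Run p s p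

/-- `*`-strong detectability. -/
def StarSD (S : LFSA Q E A) : Prop :=
  ∃ k : ℕ, 0 < k ∧ ∀ s ∈ S.L, ∀ σ : List A, σ <+: S.out s → k < σ.length →
    ∃ q : Q, S.M σ = {q}

/-- ω-strong detectability. -/
def OmegaSD (S : LFSA Q E A) : Prop :=
  ∃ k : ℕ, 0 < k ∧ ∀ (s : ℕ → E) (ρ : ℕ → Q), ρ 0 ∈ S.Q0 →
    (∀ n : ℕ, S.δ (ρ n) (s n) (ρ (n + 1))) →
    ∀ (n : ℕ) (σ : List A), σ <+: S.out (List.ofFn (fun i : Fin n => s i)) →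
      k < σ.length → ∃ q : Q, S.M σ = {q}

/-- Concurrent composition: observable transitions with equal labels synchronize,
unobservable transitions interleave. Events are pairs over `Option E` (`none` = ε). -/
def CC (S1 : LFSA Q1 E A) (S2 : LFSA Q2 E A) :
    LFSA (Q1 × Q2) (Option E × Option E) A where
  δ p ev p' :=
    match ev with
    | (some e, some e') =>
        (∃ a : A, S1.lab e = some a ∧ S2.lab e' = some a) ∧
          S1.δ p.1 e p'.1 ∧ S2.δ p.2 e' p'.2
    | (some e, none) => S1.lab e = none ∧ S1.δ p.1 e p'.1 ∧ p.2 = p'.2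
    | (none, some e') => S2.lab e' = none ∧ p.1 = p'.1 ∧ S2.δ p.2 e' p'.2
    | (none, none) => False
  Q0 := {p | p.1 ∈ S1.Q0 ∧ p.2 ∈ S2.Q0}
  lab ev := ev.1.bind S1.lab

/-- Left projection of an event sequence of a concurrent composition. -/
def lproj (s : List (Option E × Option E)) : List E := s.filterMap Prod.fst

/-- Right projection of an event sequence of a concurrent composition. -/
def rproj (s : List (Option E × Option E)) : List E := s.filterMap Prod.snd

/-- Unobservable reach of a set of states. -/
def UR (S : LFSA Q E A) (X : Set Q) : Set Q :=
  {q | ∃ q0 ∈ X, ∃ s : List E, S.out s = [] ∧ S.Run q0 s q}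

/-- One step of the observer (powerset construction). -/
def obsStep (S : LFSA Q E A) (x : Set Q) (a : A) : Set Q :=
  {q' | ∃ q ∈ x, ∃ (e : E) (p : Q), S.lab e = some a ∧ S.δ q e p ∧ q' ∈ S.UR {p}}

/-- Observer run (deterministic). -/
def obsRun (S : LFSA Q E A) (x : Set Q) (σ : List A) : Set Q := σ.foldl S.obsStep x

/-- The concurrent composition `CC(S_ε, Obs^ε)` of `S` (with events relabeled by their
labels) and a deterministic observer with step function `ostep` and initial state `x0`:
observable transitions move both components, unobservable ones move only the left one. -/
def CCObs (S : LFSA Q E A) (ostep : Set Q → A → Set Q) (x0 : Set Q) :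
    LFSA (Q × Set Q) E A where
  δ p e p' := S.δ p.1 e p'.1 ∧
    (∀ a : A, S.lab e = some a → p'.2 = ostep p.2 a) ∧
    (S.lab e = none → p'.2 = p.2)
  Q0 := {p | p.1 ∈ S.Q0 ∧ p.2 = x0}
  lab := S.lab

/-- A state is reachable if it is an initial state or reachable from one. -/
def Reachable (S : LFSA Q E A) (q : Q) : Prop := ∃ q0 ∈ S.Q0, ∃ s : List E, S.Run q0 s q

/-- Restriction of an automaton to a set of allowed states. -/
def restrict (S : LFSA Q E A) (P : Set Q) : LFSA Q E A where
  δ q e q' := S.δ q e q' ∧ q ∈ P ∧ q' ∈ P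
  Q0 := S.Q0 ∩ P
  lab := S.lab

/-- A run all of whose states (including endpoints) lie in `P`. -/
inductive RunIn (S : LFSA Q E A) (P : Set Q) : Q → List E → Q → Prop
  | nil (q : Q) : q ∈ P → RunIn S P q [] q
  | cons {q q' q'' : Q} {e : E} {s : List E} :
      q ∈ P → S.δ q e q' → RunIn S P q' s q'' → RunIn S P q (e :: s) q''

/-- Normal subautomaton: all faulty transitions removed. -/
def Sn (S : LFSA Q E A) (Ef : Set E) : LFSA Q E A where
  δ q e q' := S.δ q e q' ∧ e ∉ Ef
  Q0 := S.Q0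
  lab := S.lab

/-- Faulty subautomaton: faulty transitions together with all their
predecessor and successor transitions. -/
def Sf (S : LFSA Q E A) (Ef : Set E) : LFSA Q E A where
  δ q e q' := S.δ q e q' ∧ ∃ c f d, f ∈ Ef ∧ S.δ c f d ∧
      ((q = c ∧ e = f ∧ q' = d) ∨ (c = q' ∨ S.ReachPlus q' c) ∨ (q = d ∨ S.ReachPlus d q))
  Q0 := S.Q0
  lab := S.lab

/-- `s` ends with a faulty event. -/
def EndsFaulty (Ef : Set E) (s : List E) : Prop := ∃ (t : List E) (e : E), e ∈ Ef ∧ s = t ++ [e]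

/-- `E_f`-diagnosability. -/
def Diag (S : LFSA Q E A) (Ef : Set E) : Prop :=
  ∃ k : ℕ, ∀ s ∈ S.L, EndsFaulty Ef s → ∀ s' : List E, s ++ s' ∈ S.L → k < s'.length →
    ∀ s'' ∈ S.L, S.out s'' = S.out (s ++ s') → ∃ e ∈ Ef, e ∈ s''

/-- `E_f`-predictability. -/
def Pred (S : LFSA Q E A) (Ef : Set E) : Prop :=
  ∃ k : ℕ, ∀ s ∈ S.L, EndsFaulty Ef s →
    ∃ s' : List E, s' <+: s ∧ (∀ e ∈ s', e ∉ Ef) ∧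
      ∀ u v : List E, u ++ v ∈ S.L → S.out s' = S.out u → (∀ e ∈ u, e ∉ Ef) →
        k < v.length → ∃ e ∈ Ef, e ∈ v

/-- Current-state opacity. -/
def CSO (S : LFSA Q E A) (QS : Set Q) : Prop :=
  ∀ q0 ∈ S.Q0, ∀ (s : List E) (q : Q), S.Run q0 s q → q ∈ QS →
    ∃ q0' ∈ S.Q0, ∃ (s' : List E) (q' : Q), S.Run q0' s' q' ∧ q' ∉ QS ∧ S.out s = S.out s'

/-- Initial-state opacity. -/
def ISO (S : LFSA Q E A) (QS : Set Q) : Prop :=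
  ∀ q0 ∈ S.Q0 ∩ QS, ∀ (s : List E) (q : Q), S.Run q0 s q →
    ∃ q0' ∈ S.Q0 \ QS, ∃ (s' : List E) (q' : Q), S.Run q0' s' q' ∧ S.out s = S.out s'

/-- Infinite-step opacity. -/
def InfSO (S : LFSA Q E A) (QS : Set Q) : Prop :=
  ∀ q0 ∈ S.Q0, ∀ (s1 : List E) (q1 : Q) (s2 : List E) (q2 : Q),
    S.Run q0 s1 q1 → S.Run q1 s2 q2 → q1 ∈ QS →
    ∃ q0' ∈ S.Q0, ∃ (s1' : List E) (q1' : Q) (s2' : List E) (q2' : Q),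
      S.Run q0' s1' q1' ∧ S.Run q1' s2' q2' ∧ q1' ∉ QS ∧
        S.out s1 = S.out s1' ∧ S.out s2 = S.out s2'

/-- `K`-step opacity. -/
def KSO (S : LFSA Q E A) (QS : Set Q) (K : ℕ) : Prop :=
  ∀ q0 ∈ S.Q0, ∀ (s1 : List E) (q1 : Q) (s2 : List E) (q2 : Q),
    S.Run q0 s1 q1 → S.Run q1 s2 q2 → q1 ∈ QS → (S.out s2).length ≤ K →
    ∃ q0' ∈ S.Q0, ∃ (s1' : List E) (q1' : Q) (s2' : List E) (q2' : Q),
      S.Run q0' s1' q1' ∧ S.Run q1' s2' q2' ∧ q1' ∉ QS ∧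
        S.out s1 = S.out s1' ∧ S.out s2 = S.out s2'

/-- Strong current-state opacity: the matching run is entirely non-secret. -/
def SCSO (S : LFSA Q E A) (QS : Set Q) : Prop :=
  ∀ q0 ∈ S.Q0, ∀ (s : List E) (q : Q), S.Run q0 s q → q ∈ QS →
    ∃ q0' ∈ S.Q0, ∃ (s' : List E) (q' : Q), S.RunIn QSᶜ q0' s' q' ∧ S.out s = S.out s'

/-- Strong initial-state opacity. -/
def SISO (S : LFSA Q E A) (QS : Set Q) : Prop :=
  ∀ q0 ∈ S.Q0 ∩ QS, ∀ (s : List E) (q : Q), S.Run q0 s q →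
    ∃ q0' ∈ S.Q0 \ QS, ∃ (s' : List E) (q' : Q), S.RunIn QSᶜ q0' s' q' ∧ S.out s = S.out s'

/-- Strong infinite-step opacity. -/
def SInfSO (S : LFSA Q E A) (QS : Set Q) : Prop :=
  ∀ q0 ∈ S.Q0, ∀ (s1 : List E) (q1 : Q) (s2 : List E) (q2 : Q),
    S.Run q0 s1 q1 → S.Run q1 s2 q2 → q1 ∈ QS →
    ∃ q0' ∈ S.Q0, ∃ (s1' : List E) (q1' : Q) (s2' : List E) (q2' : Q),
      S.RunIn QSᶜ q0' s1' q1' ∧ S.RunIn QSᶜ q1' s2' q2' ∧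
        S.out s1 = S.out s1' ∧ S.out s2 = S.out s2'

/-- Strong `K`-step opacity. -/
def SKSO (S : LFSA Q E A) (QS : Set Q) (K : ℕ) : Prop :=
  ∀ q0 ∈ S.Q0, ∀ (s1 : List E) (q1 : Q) (s2 : List E) (q2 : Q),
    S.Run q0 s1 q1 → S.Run q1 s2 q2 → q1 ∈ QS → (S.out s2).length ≤ K →
    ∃ q0' ∈ S.Q0, ∃ (s1' : List E) (q1' : Q) (s2' : List E) (q2' : Q),
      S.RunIn QSᶜ q0' s1' q1' ∧ S.RunIn QSᶜ q1' s2' q2' ∧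
        S.out s1 = S.out s1' ∧ S.out s2 = S.out s2'

/-- Observer step of the secret-deleted subautomaton `S_dss`. -/
def dssObsStep (S : LFSA Q E A) (QS : Set Q) : Set Q → A → Set Q :=
  (S.restrict QSᶜ).obsStep

/-- Initial observer state of the secret-deleted subautomaton. -/
def dssInit (S : LFSA Q E A) (QS : Set Q) : Set Q :=
  (S.restrict QSᶜ).UR (S.restrict QSᶜ).Q0

end LFSA

namespace LFSA

variable {Q Q1 Q2 E A : Type*}

lemma Run.append {S : LFSA Q E A} {q q' q'' : Q} {t u : List E}
    (h1 : S.Run q t q') (h2 : S.Run q' u q'') : S.Run q (t ++ u) q'' := by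
  induction h1 with
  | nil q => simpa using h2
  | cons hd _ ih => exact Run.cons hd (ih h2)

lemma run_append_split {S : LFSA Q E A} {q q'' : Q} {t u : List E}
    (h : S.Run q (t ++ u) q'') : ∃ q', S.Run q t q' ∧ S.Run q' u q'' := by
  induction t generalizing q with
  | nil => exact ⟨q, Run.nil q, h⟩
  | cons e t ih =>
    cases h with
    | cons hstep hrun =>
      obtain ⟨q', h1, h2⟩ := ih hrun
      exact ⟨q', Run.cons hstep h1, h2⟩

lemma sn_run_of_run {S : LFSA Q E A} {Ef : Set E} {q q' : Q} {t : List E}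
    (h : S.Run q t q') (hff : ∀ e ∈ t, e ∉ Ef) : (S.Sn Ef).Run q t q' := by
  induction h with
  | nil q => exact Run.nil q
  | cons hstep _ ih =>
    exact Run.cons ⟨hstep, hff _ List.mem_cons_self⟩
      (ih fun e he => hff e (List.mem_cons_of_mem _ he))

lemma run_of_sn_run {S : LFSA Q E A} {Ef : Set E} {q q' : Q} {t : List E}
    (h : (S.Sn Ef).Run q t q') : S.Run q t q' ∧ ∀ e ∈ t, e ∉ Ef := by
  induction h with
  | nil q => exact ⟨Run.nil q, by simp⟩
  | cons hstep _ ih =>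
    refine ⟨Run.cons hstep.1 ih.1, ?_⟩
    intro e he
    rcases List.mem_cons.mp he with h | h
    · exact h ▸ hstep.2
    · exact ih.2 e h

/-- Combining two runs with equal outputs into a run of the concurrent composition. -/
lemma cc_combine {S1 : LFSA Q1 E A} {S2 : LFSA Q2 E A} :
    ∀ (n : ℕ) (t u : List E) (q0 q1 : Q1) (p0 p1 : Q2),
      t.length + u.length ≤ n → S1.Run q0 t q1 → S2.Run p0 u p1 →
      S1.out t = S2.out u →
      ∃ w, (S1.CC S2).Run (q0, p0) w (q1, p1) := by
  intro n
  induction n with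
  | zero =>
    intro t u q0 q1 p0 p1 hn h1 h2 _
    have ht : t = [] := List.length_eq_zero_iff.mp (by omega)
    have hu : u = [] := List.length_eq_zero_iff.mp (by omega)
    subst ht; subst hu
    cases h1; cases h2
    exact ⟨[], Run.nil _⟩
  | succ n ih =>
    intro t u q0 q1 p0 p1 hn h1 h2 hout
    cases h1 with
    | nil =>
      cases h2 with
      | nil => exact ⟨[], Run.nil _⟩
      | @cons _ p' _ e u' hstep hrun =>
        cases hlab : S2.lab e with
        | some a => simp [out, hlab] at hout
        | none =>
          have hout' : S1.out [] = S2.out u' := by simpa [out, hlab] using hout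
          obtain ⟨w, hw⟩ := ih [] u' q0 q0 p' p1 (by simp at hn ⊢; omega) (Run.nil q0) hrun hout'
          refine ⟨(none, some e) :: w, Run.cons ?_ hw⟩
          exact ⟨hlab, rfl, hstep⟩
    | @cons _ q' _ e t' hstep hrun =>
      cases hlabe : S1.lab e with
      | none =>
        have hout' : S1.out t' = S2.out u := by simpa [out, hlabe] using hout
        obtain ⟨w, hw⟩ := ih t' u q' q1 p0 p1 (by simp at hn ⊢; omega) hrun h2 hout'
        refine ⟨(some e, none) :: w, Run.cons ?_ hw⟩
        exact ⟨hlabe, hstep, rfl⟩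
      | some a =>
        cases h2 with
        | nil => simp [out, hlabe] at hout
        | @cons _ p' _ e' u' hstep2 hrun2 =>
          cases hlabe' : S2.lab e' with
          | none =>
            have hout' : S1.out (e :: t') = S2.out u' := by
              simpa [out, hlabe'] using hout
            obtain ⟨w, hw⟩ := ih (e :: t') u' q0 q1 p' p1 (by simp at hn ⊢; omega)
              (Run.cons hstep hrun) hrun2 hout'
            refine ⟨(none, some e') :: w, Run.cons ?_ hw⟩
            exact ⟨hlabe', rfl, hstep2⟩
          | some a' =>
            have hout2 : a = a' ∧ S1.out t' = S2.out u' := by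
              have := hout
              simp [out, hlabe, hlabe'] at this
              exact this
            obtain ⟨w, hw⟩ := ih t' u' q' q1 p' p1 (by simp at hn ⊢; omega) hrun hrun2 hout2.2
            refine ⟨(some e, some e') :: w, Run.cons ⟨⟨a, hlabe, ?_⟩, hstep, hstep2⟩ hw⟩
            rw [hlabe', hout2.1]

/-- Projections of a run of the concurrent composition. -/
lemma cc_run_proj {S1 : LFSA Q1 E A} {S2 : LFSA Q2 E A} {p p' : Q1 × Q2}
    {w : List (Option E × Option E)} (h : (S1.CC S2).Run p w p') :
    S1.Run p.1 (lproj w) p'.1 ∧ S2.Run p.2 (rproj w) p'.2 ∧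
      S1.out (lproj w) = S2.out (rproj w) := by
  induction h with
  | nil q => exact ⟨Run.nil _, Run.nil _, rfl⟩
  | @cons p pm p' ev w' hstep hrun ih =>
    obtain ⟨oe, oe'⟩ := ev
    match oe, oe' with
    | some e, some e' =>
      obtain ⟨⟨a, ha1, ha2⟩, hδ1, hδ2⟩ := hstep
      refine ⟨?_, ?_, ?_⟩
      · simpa [lproj] using Run.cons hδ1 ih.1
      · simpa [rproj] using Run.cons hδ2 ih.2.1
      · simp [lproj, rproj, out, ha1, ha2]
        simpa [out, lproj, rproj] using ih.2.2
    | some e, none =>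
      obtain ⟨hlab, hδ1, heq⟩ := hstep
      refine ⟨?_, ?_, ?_⟩
      · simpa [lproj] using Run.cons hδ1 ih.1
      · simpa [rproj, heq] using ih.2.1
      · simp [lproj, rproj, out, hlab]
        simpa [out, lproj, rproj] using ih.2.2
    | none, some e' =>
      obtain ⟨hlab, heq, hδ2⟩ := hstep
      refine ⟨?_, ?_, ?_⟩
      · simpa [lproj, heq] using ih.1
      · simpa [rproj] using Run.cons hδ2 ih.2.1
      · simp [lproj, rproj, out, hlab]
        simpa [out, lproj, rproj] using ih.2.2
    | none, none => exact absurd hstep id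

/-- For any prefix of the left projection of a CC run, the right component can be
split at a matching midpoint. -/
lemma cc_prefix {S1 : LFSA Q1 E A} {S2 : LFSA Q2 E A} {p p' : Q1 × Q2}
    {w : List (Option E × Option E)} (h : (S1.CC S2).Run p w p')
    {s' : List E} (hpre : s' <+: lproj w) :
    ∃ (qm : Q2) (u v : List E), S2.Run p.2 u qm ∧ S2.Run qm v p'.2 ∧
      S2.out u = S1.out s' := by
  induction h generalizing s' with
  | nil q =>
    have : s' = [] := List.prefix_nil.mp (by simpa [lproj] using hpre)
    subst this
    exact ⟨q.2, [], [], Run.nil _, Run.nil _, rfl⟩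
  | @cons p pm p' ev w' hstep hrun ih =>
    obtain ⟨oe, oe'⟩ := ev
    match oe, oe' with
    | some e, some e' =>
      obtain ⟨⟨a, ha1, ha2⟩, hδ1, hδ2⟩ := hstep
      have hl : lproj ((some e, some e') :: w') = e :: lproj w' := by simp [lproj]
      rw [hl] at hpre
      match s', hpre with
      | [], _ => exact ⟨p.2, [], rproj ((some e, some e') :: w'),
          Run.nil _, by simpa [rproj] using Run.cons hδ2 (cc_run_proj hrun).2.1, rfl⟩
      | e2 :: s'', hpre =>
        obtain ⟨heq2, hpre'⟩ := List.cons_prefix_cons.mp hpre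
        subst heq2
        obtain ⟨qm, u, v, hu, hv, hout⟩ := ih hpre'
        exact ⟨qm, e' :: u, v, Run.cons hδ2 hu, hv, by simp [out, ha1, ha2]; simpa [out] using hout⟩
    | some e, none =>
      obtain ⟨hlab, hδ1, heq⟩ := hstep
      have hl : lproj ((some e, none) :: w') = e :: lproj w' := by simp [lproj]
      rw [hl] at hpre
      match s', hpre with
      | [], _ => exact ⟨p.2, [], rproj ((some e, (none : Option E)) :: w'),
          Run.nil _, by simpa [rproj, heq] using (cc_run_proj hrun).2.1, rfl⟩
      | e2 :: s'', hpre =>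
        obtain ⟨heq2, hpre'⟩ := List.cons_prefix_cons.mp hpre
        subst heq2
        obtain ⟨qm, u, v, hu, hv, hout⟩ := ih hpre'
        exact ⟨qm, u, v, heq ▸ hu, hv, by simp [out, hlab]; simpa [out] using hout⟩
    | none, some e' =>
      obtain ⟨hlab, heq, hδ2⟩ := hstep
      have hl : lproj (((none : Option E), some e') :: w') = lproj w' := by simp [lproj]
      rw [hl] at hpre
      obtain ⟨qm, u, v, hu, hv, hout⟩ := ih hpre
      exact ⟨qm, e' :: u, v, Run.cons hδ2 hu, hv, by simp [out, hlab]; simpa [out] using hout⟩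
    | none, none => exact absurd hstep id

/-- Pigeonhole: a long run leads to a reachable cycle. -/
lemma find_cycle {S : LFSA Q E A} [Fintype Q] :
    ∀ (s : List E) (q q' : Q) (V : Finset Q), S.Run q s q' →
      Fintype.card Q < s.length + V.card →
      (∃ p ∈ V, p = q ∨ S.ReachPlus q p) ∨ S.CycleReachableFrom q := by
  classical
  intro s
  induction s with
  | nil =>
    intro q q' V _ hcard
    have := Finset.card_le_univ V
    simp [Finset.card_univ] at this hcard
    omega
  | cons e s ih =>
    intro q q' V h hcard
    cases h with
    | @cons _ q1 _ _ _ hstep hrun =>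
      by_cases hq : q ∈ V
      · exact Or.inl ⟨q, hq, Or.inl rfl⟩
      · have hcard' : Fintype.card Q < s.length + (insert q V).card := by
          rw [Finset.card_insert_of_notMem hq]
          simp at hcard
          omega
        rcases ih q1 q' (insert q V) hrun hcard' with ⟨p, hpmem, hp⟩ | ⟨p, hreach, c, hcne, hc⟩
        · rcases Finset.mem_insert.mp hpmem with hpq | hpV
          · rw [hpq] at hp
            rcases hp with hpq1 | ⟨ws, hwne, hwrun⟩
            · refine Or.inr ⟨q, Or.inl rfl, [e], by simp, ?_⟩
              exact Run.cons hstep (by rw [← hpq1]; exact Run.nil q)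
            · exact Or.inr ⟨q, Or.inl rfl, e :: ws, by simp, Run.cons hstep hwrun⟩
          · refine Or.inl ⟨p, hpV, Or.inr ?_⟩
            rcases hp with hpq1 | ⟨ws, hwne, hwrun⟩
            · exact ⟨[e], by simp, Run.cons hstep (by rw [hpq1]; exact Run.nil q1)⟩
            · exact ⟨e :: ws, by simp, Run.cons hstep hwrun⟩
        · refine Or.inr ⟨p, Or.inr ?_, c, hcne, hc⟩
          rcases hreach with hpq1 | ⟨ws, hwne, hwrun⟩
          · exact ⟨[e], by simp, Run.cons hstep (by rw [hpq1]; exact Run.nil q1)⟩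
          · exact ⟨e :: ws, by simp, Run.cons hstep hwrun⟩

lemma pump {S : LFSA Q E A} {p : Q} {c : List E} (hne : c ≠ []) (hc : S.Run p c p) :
    ∀ m : ℕ, ∃ c', m ≤ c'.length ∧ S.Run p c' p
  | 0 => ⟨[], by simp, Run.nil p⟩
  | m + 1 => by
    obtain ⟨c', hlen, hrun⟩ := pump hne hc m
    have hpos : 0 < c.length := List.length_pos_iff.mpr hne
    exact ⟨c' ++ c, by simp; omega, hrun.append hc⟩

lemma first_fault {Ef : Set E} :
    ∀ s : List E, (∃ e ∈ s, e ∈ Ef) →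
      ∃ t e rest, s = t ++ e :: rest ∧ e ∈ Ef ∧ ∀ x ∈ t, x ∉ Ef := by
  classical
  intro s
  induction s with
  | nil => simp
  | cons a s ih =>
    intro h
    by_cases ha : a ∈ Ef
    · exact ⟨[], a, s, rfl, ha, by simp⟩
    · obtain ⟨e, he, hef⟩ := h
      have hes : e ∈ s := by
        rcases List.mem_cons.mp he with h' | h'
        · exact absurd (h' ▸ hef) ha
        · exact h'
      obtain ⟨t, e', rest, heq, h1, h2⟩ := ih ⟨e, hes, hef⟩
      refine ⟨a :: t, e', rest, by rw [heq]; rfl, h1, ?_⟩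
      intro x hx
      rcases List.mem_cons.mp hx with h' | h'
      · exact h' ▸ ha
      · exact h2 x h'

end LFSA

/-- concurrent-composition characterization of non-predictability. -/
theorem stmt7 {Q E A : Type*} [Fintype Q] (S : LFSA Q E A) (Ef : Set E) :
    ¬ S.Pred Ef ↔
      ∃ q0' ∈ ((S.Sn Ef).CC (S.Sn Ef)).Q0,
        ∃ (q1' : Q × Q) (s1' : List (Option E × Option E)),
          ((S.Sn Ef).CC (S.Sn Ef)).Run q0' s1' q1' ∧
          (∃ ef ∈ Ef, ∃ q : Q, S.δ q1'.1 ef q) ∧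
          (S.Sn Ef).CycleReachableFrom q1'.2 := by
  constructor
  · -- ¬Pred → witness
    intro h
    have h1 : ¬ (∀ s ∈ S.L, LFSA.EndsFaulty Ef s →
        ∃ s' : List E, s' <+: s ∧ (∀ e ∈ s', e ∉ Ef) ∧
          ∀ u v : List E, u ++ v ∈ S.L → S.out s' = S.out u → (∀ e ∈ u, e ∉ Ef) →
            Fintype.card Q < v.length → ∃ e ∈ Ef, e ∈ v) :=
      fun hh => h ⟨Fintype.card Q, hh⟩
    push_neg at h1
    obtain ⟨s, hsL, hEnds, hkey⟩ := h1
    -- s contains a fault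
    obtain ⟨tt, ef0, hef0, hseq⟩ := hEnds
    have hfault : ∃ e ∈ s, e ∈ Ef := ⟨ef0, by simp [hseq], hef0⟩
    obtain ⟨t0, ef, rest, hs_eq, hefEf, ht0ff⟩ := LFSA.first_fault s hfault
    -- runs
    obtain ⟨q0, hq0, qe, hrun⟩ := hsL
    rw [hs_eq] at hrun
    obtain ⟨qq1, hrun_t0, hrun_rest⟩ := LFSA.run_append_split hrun
    have hδef : ∃ q2, S.δ qq1 ef q2 := by
      cases hrun_rest with
      | cons hstep _ => exact ⟨_, hstep⟩
    -- apply hkey with s' = t0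
    obtain ⟨u, v, huvL, hout, huff, hvlen, hvff⟩ :=
      hkey t0 ⟨ef :: rest, hs_eq.symm⟩ ht0ff
    obtain ⟨p0, hp0, pe, hrun_uv⟩ := huvL
    have huvff : ∀ e ∈ u ++ v, e ∉ Ef := by
      intro e he
      rcases List.mem_append.mp he with h' | h'
      · exact huff e h'
      · exact fun hEf => hvff e hEf h'
    have hrun_uv_n := LFSA.sn_run_of_run hrun_uv huvff
    obtain ⟨pp1, hrun_u, hrun_v⟩ := LFSA.run_append_split hrun_uv_n
    have hrun_t0_n := LFSA.sn_run_of_run hrun_t0 ht0ff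
    -- combine into CC run
    obtain ⟨w, hw⟩ := LFSA.cc_combine (t0.length + u.length) t0 u q0 qq1 p0 pp1
      le_rfl hrun_t0_n hrun_u hout
    refine ⟨(q0, p0), ⟨hq0, hp0⟩, (qq1, pp1), w, hw, ⟨ef, hefEf, hδef⟩, ?_⟩
    -- cycle reachable from pp1
    rcases LFSA.find_cycle v pp1 pe ∅ hrun_v (by simpa using hvlen) with ⟨p, hp, _⟩ | hcyc
    · exact absurd hp (Finset.notMem_empty p)
    · exact hcyc
  · -- witness → ¬Pred
    rintro ⟨⟨a0, b0⟩, ⟨ha0, hb0⟩, ⟨qL, qR⟩, s1', hccrun, ⟨ef, hef, qhat, hδef⟩, p, hreach, c, hcne, hcyc⟩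
    rintro ⟨k, hk⟩
    -- the faulty string
    have hproj := LFSA.cc_run_proj hccrun
    have hrunL : S.Run a0 (LFSA.lproj s1') qL := (LFSA.run_of_sn_run hproj.1).1
    have hLff : ∀ e ∈ LFSA.lproj s1', e ∉ Ef := (LFSA.run_of_sn_run hproj.1).2
    have hrun_s : S.Run a0 (LFSA.lproj s1' ++ [ef]) qhat :=
      hrunL.append (LFSA.Run.cons hδef (LFSA.Run.nil qhat))
    have hsL : LFSA.lproj s1' ++ [ef] ∈ S.L := ⟨a0, ha0, qhat, hrun_s⟩
    obtain ⟨s', hpre, hs'ff, hforall⟩ := hk _ hsL ⟨LFSA.lproj s1', ef, hef, rfl⟩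
    -- s' is a prefix of lproj s1'
    have hpre' : s' <+: LFSA.lproj s1' := by
      by_cases hlen : s'.length ≤ (LFSA.lproj s1').length
      · exact List.prefix_of_prefix_length_le hpre (List.prefix_append _ _) hlen
      · exfalso
        have h1 : s'.length ≤ (LFSA.lproj s1').length + 1 := by
          simpa using hpre.length_le
        have h2 : s' = LFSA.lproj s1' ++ [ef] := hpre.eq_of_length (by simp; omega)
        exact hs'ff ef (by simp [h2]) hef
    obtain ⟨qm, u, v0, hu, hv0, houtu⟩ := LFSA.cc_prefix hccrun hpre'
    -- build the long normal continuation
    have hpath : ∃ v1 : List E, (S.Sn Ef).Run qR v1 p := by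
      rcases hreach with h' | ⟨ws, _, hws⟩
      · exact ⟨[], h' ▸ LFSA.Run.nil qR⟩
      · exact ⟨ws, hws⟩
    obtain ⟨v1, hv1⟩ := hpath
    obtain ⟨c', hc'len, hc'⟩ := LFSA.pump hcne hcyc (k + 1)
    have hrun_v : (S.Sn Ef).Run qm (v0 ++ v1 ++ c') p :=
      (hv0.append hv1).append hc'
    have hrun_full : (S.Sn Ef).Run b0 (u ++ (v0 ++ v1 ++ c')) p := hu.append hrun_v
    have hfullS := LFSA.run_of_sn_run hrun_full
    have hmem : u ++ (v0 ++ v1 ++ c') ∈ S.L := ⟨b0, hb0, p, hfullS.1⟩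
    have houteq : S.out s' = S.out u := houtu.symm
    have huff : ∀ e ∈ u, e ∉ Ef := fun e he =>
      hfullS.2 e (List.mem_append.mpr (Or.inl he))
    have hlen : k < (v0 ++ v1 ++ c').length := by
      simp
      omega
    obtain ⟨e, heEf, hev⟩ := hforall u (v0 ++ v1 ++ c') hmem houteq huff hlen
    exact hfullS.2 e (List.mem_append.mpr (Or.inr hev)) heEf
end

section
/- An LFSA S is current-state opaque with respect to a set of secret states Q_S if and only if every nonempty reachable state x of the observer S_obs satisfies x ⊄ Q_S (i.e., x is not a subset of Q_S). -/
namespace LFSA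

variable {Q E A : Type*}

lemma run_trans {S : LFSA Q E A} {q q' q'' : Q} {s t : List E}
    (h1 : S.Run q s q') (h2 : S.Run q' t q'') : S.Run q (s ++ t) q'' := by
  induction h1 with
  | nil => simpa
  | cons hd _ ih => exact Run.cons hd (ih h2)

lemma out_append (S : LFSA Q E A) (s t : List E) :
    S.out (s ++ t) = S.out s ++ S.out t := List.filterMap_append ..

/-- A set closed under unobservable runs. -/
def URClosed (S : LFSA Q E A) (x : Set Q) : Prop :=
  ∀ q ∈ x, ∀ s : List E, S.out s = [] → ∀ q', S.Run q s q' → q' ∈ x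

lemma urClosed_UR (S : LFSA Q E A) (X : Set Q) : S.URClosed (S.UR X) := by
  rintro q ⟨q0, hq0, s, hs, hr⟩ t ht q' hr'
  exact ⟨q0, hq0, s ++ t, by simp [out_append, hs, ht], run_trans hr hr'⟩

lemma urClosed_obsStep (S : LFSA Q E A) (x : Set Q) (a : A) :
    S.URClosed (S.obsStep x a) := by
  rintro q ⟨q0, hq0, e, p, hl, hd, hur⟩ t ht q' hr'
  exact ⟨q0, hq0, e, p, hl, hd, urClosed_UR S {p} q hur t ht q' hr'⟩

lemma run_split {S : LFSA Q E A} {p q : Q} {u t : List E}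
    (hr : S.Run p (u ++ t) q) : ∃ q1, S.Run p u q1 ∧ S.Run q1 t q := by
  induction u generalizing p with
  | nil => exact ⟨p, Run.nil p, by simpa using hr⟩
  | cons e' u ih2 =>
    rcases hr with _ | @⟨_, q', _, _, _, hd, hr'⟩
    obtain ⟨q1, ha, hb⟩ := ih2 hr'
    exact ⟨q1, Run.cons hd ha, hb⟩

lemma out_cons_split {S : LFSA Q E A} {s : List E} {a : A} {σ : List A}
    (h : S.out s = a :: σ) :
    ∃ u e v, s = u ++ e :: v ∧ S.out u = [] ∧ S.lab e = some a ∧ S.out v = σ := by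
  induction s with
  | nil => simp [out] at h
  | cons e s ih =>
    rcases he : S.lab e with _ | b
    · have h' : S.out s = a :: σ := by simpa [out, he] using h
      obtain ⟨u, e', v, h1, h2, h3, h4⟩ := ih h'
      exact ⟨e :: u, e', v, by simp [h1], by simp [out, he] at h2 ⊢; exact h2, h3, h4⟩
    · have h' : b :: S.out s = a :: σ := by simpa [out, he] using h
      obtain ⟨rfl, rfl⟩ : b = a ∧ S.out s = σ := by simpa using h'
      exact ⟨[], e, s, rfl, rfl, he, rfl⟩

lemma obsRun_eq (S : LFSA Q E A) (σ : List A) :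
    ∀ x : Set Q, S.URClosed x →
      S.obsRun x σ = {q | ∃ p ∈ x, ∃ s : List E, S.out s = σ ∧ S.Run p s q} := by
  induction σ with
  | nil =>
    intro x hx
    ext q
    constructor
    · intro hq; exact ⟨q, hq, [], rfl, Run.nil q⟩
    · rintro ⟨p, hp, s, hs, hr⟩
      exact hx p hp s hs q hr
  | cons a σ ih =>
    intro x hx
    have : S.obsRun x (a :: σ) = S.obsRun (S.obsStep x a) σ := rfl
    rw [this, ih _ (urClosed_obsStep S x a)]
    ext q
    constructor
    · rintro ⟨p, ⟨q0, hq0, e, r, hl, hd, r', hr', u, hu, hru⟩, s, hs, hr⟩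
      simp only [Set.mem_singleton_iff] at hr'
      subst hr'
      refine ⟨q0, hq0, e :: (u ++ s), ?_, Run.cons hd (run_trans hru hr)⟩
      simp only [out] at hu hs ⊢
      simp [hl, List.filterMap_append, hu, hs]
    · rintro ⟨p, hp, s, hs, hr⟩
      obtain ⟨u, e, v, rfl, hu, hl, hv⟩ := out_cons_split hs
      obtain ⟨q1, hr1, hr2⟩ := run_split hr
      rcases hr2 with _ | @⟨_, q2, _, _, _, hd, hr'⟩
      have hq1 : q1 ∈ x := hx p hp u hu q1 hr1
      exact ⟨q2, ⟨q1, hq1, e, q2, hl, hd, q2, rfl, [], rfl, Run.nil q2⟩, v, hv, hr'⟩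

lemma obsRun_UR_eq_M (S : LFSA Q E A) (σ : List A) :
    S.obsRun (S.UR S.Q0) σ = S.M σ := by
  rw [obsRun_eq S σ _ (urClosed_UR S S.Q0)]
  ext q
  constructor
  · rintro ⟨p, ⟨q0, hq0, u, hu, hru⟩, s, hs, hr⟩
    exact ⟨q0, hq0, u ++ s, by simp [out_append, hu, hs], run_trans hru hr⟩
  · rintro ⟨q0, hq0, s, hs, hr⟩
    exact ⟨q0, ⟨q0, hq0, [], rfl, Run.nil q0⟩, s, hs, hr⟩

end LFSA

/-- observer characterization of current-state opacity. -/
theorem stmt8 {Q E A : Type*} (S : LFSA Q E A) (QS : Set Q) :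
    S.CSO QS ↔
      ∀ σ : List A, (S.obsRun (S.UR S.Q0) σ).Nonempty →
        ¬ (S.obsRun (S.UR S.Q0) σ ⊆ QS) := by
  simp only [LFSA.obsRun_UR_eq_M]
  constructor
  · intro h σ hne hsub
    obtain ⟨q, hq⟩ := hne
    obtain ⟨q0, hq0, s, hs, hr⟩ := id hq
    obtain ⟨q0', hq0', s', q', hr', hq', hout⟩ := h q0 hq0 s q hr (hsub hq)
    exact hq' (hsub ⟨q0', hq0', s', by rw [← hout, hs], hr'⟩)
  · intro h q0 hq0 s q hr hq
    have hne : (S.M (S.out s)).Nonempty := ⟨q, q0, hq0, s, rfl, hr⟩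
    obtain ⟨q', hq', hqs⟩ := Set.not_subset.mp (h _ hne)
    obtain ⟨q0', hq0', s', hs', hr'⟩ := hq'
    exact ⟨q0', hq0', s', q', hr', hqs, hs'.symm⟩
end
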